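/- For every integer m ≥ 1 there is an identity of polynomials in x: m²·A₁(m,x) = x²·A₂(x,m). Consequently, for all positive integers m and n the function m²·A(m,n) is symmetric: m²·A(m,n) = n²·A(n,m). -/

import Mathlib

/-- The polynomial `[x choose k] = x(x−1)⋯(x−k+1)/k!`. -/
noncomputable def binomPoly (k : ℕ) : Polynomial ℚ :=
  Polynomial.C ((k.factorial : ℚ))⁻¹ *
    ∏ i ∈ Finset.range k, (Polynomial.X - Polynomial.C (i : ℚ))

/-- `a₁(m,x) = ∑_{ν=0}^m [x−1+ν choose ν]·[x choose m−ν]`. -/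
noncomputable def a1Poly (m : ℕ) : Polynomial ℚ :=
  ∑ ν ∈ Finset.range (m + 1),
    (binomPoly ν).comp (Polynomial.X + Polynomial.C ((ν : ℚ) - 1)) * binomPoly (m - ν)

/-- `A₁(m,x) = a₁(m,x)²`. -/
noncomputable def A1Poly (m : ℕ) : Polynomial ℚ := (a1Poly m) ^ 2

/-- `a₂(x,n) = ∑_{ν=0}^n C(n,ν)·[x−ν+n−1 choose n−1]`. -/
noncomputable def a2Poly (n : ℕ) : Polynomial ℚ :=
  ∑ ν ∈ Finset.range (n + 1),
    Polynomial.C ((n.choose ν : ℚ)) *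
      (binomPoly (n - 1)).comp (Polynomial.X + Polynomial.C ((n : ℚ) - 1 - (ν : ℚ)))

/-- `A₂(x,n) = a₂(x,n)²`. -/
noncomputable def A2Poly (n : ℕ) : Polynomial ℚ := (a2Poly n) ^ 2

/-- `a(k,l) = ∑_{ν=0}^k C(l,ν)·C(l−1+k−ν, l−1)`. -/
def aNum (k l : ℕ) : ℕ :=
  ∑ ν ∈ Finset.range (k + 1), l.choose ν * (l - 1 + k - ν).choose (l - 1)

/-- `A(k,l) = a(k,l)²`. -/
def ANum (k l : ℕ) : ℕ := (aNum k l) ^ 2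


open Polynomial Finset

lemma sym9_triangle_reindex {M : Type*} [AddCommMonoid M] (m : ℕ) (F : ℕ → ℕ → M) :
    ∑ ν ∈ range (m+1), ∑ s ∈ range (m-ν+1), F ν s
      = ∑ k ∈ range (m+1), ∑ ν ∈ range (k+1), F ν (k-ν) := by
  rw [Finset.sum_sigma', Finset.sum_sigma']
  refine Finset.sum_nbij' (fun p => ⟨p.1 + p.2, p.1⟩) (fun p => ⟨p.2, p.1 - p.2⟩)
    ?_ ?_ ?_ ?_ ?_
  · rintro ⟨ν, s⟩ h
    simp only [Finset.mem_sigma, Finset.mem_range] at *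
    omega
  · rintro ⟨k, ν⟩ h
    simp only [Finset.mem_sigma, Finset.mem_range] at *
    omega
  · rintro ⟨ν, s⟩ h; simp
  · rintro ⟨k, ν⟩ h
    simp only [Finset.mem_sigma, Finset.mem_range] at h
    have : ν + (k - ν) = k := by omega
    simp [this]
  · rintro ⟨ν, s⟩ h; simp

lemma sym9_aNum_eq (m n : ℕ) (hm : 1 ≤ m) (hn : 1 ≤ n) :
    aNum m n = ∑ k ∈ range (m+1), 2^k * n.choose k * (m-1).choose (m-k) := by
  have h1 : aNum m n
      = ∑ ν ∈ range (m+1), ∑ s ∈ range (m-ν+1),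
          n.choose ν * ((n-ν).choose s * (m-1).choose (m-ν-s)) := by
    refine Finset.sum_congr rfl ?_
    intro ν hν
    rw [Finset.mem_range] at hν
    rcases le_or_gt ν n with hνn | hνn
    · have e1 : n - 1 + m - ν = (n - ν) + (m - 1) := by omega
      have e2 : ((n-ν) + (m-1)).choose (n-1) = ((n-ν) + (m-1)).choose (m-ν) :=
        Nat.choose_symm_of_eq_add (show (n-ν)+(m-1) = (n-1)+(m-ν) by omega)
      rw [e1, e2, Nat.add_choose_eq, Finset.Nat.sum_antidiagonal_eq_sum_range_succ_mk,
        Finset.mul_sum]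
    · have : n.choose ν = 0 := Nat.choose_eq_zero_of_lt hνn
      simp [this]
  rw [h1, sym9_triangle_reindex m
    (fun ν s => n.choose ν * ((n-ν).choose s * (m-1).choose (m-ν-s)))]
  refine Finset.sum_congr rfl ?_
  intro k hk
  rw [Finset.mem_range] at hk
  have h2 : ∀ ν ∈ range (k+1), n.choose ν * ((n-ν).choose (k-ν) * (m-1).choose (m-ν-(k-ν)))
      = (n.choose k * k.choose ν) * (m-1).choose (m-k) := by
    intro ν hν
    rw [Finset.mem_range] at hν
    have e3 : m - ν - (k - ν) = m - k := by omega
    rw [e3]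
    rcases le_or_gt k n with hkn | hkn
    · rw [← mul_assoc, ← Nat.choose_mul (n := n) (k := k) (by omega)]
    · rcases le_or_gt ν n with hνn | hνn
      · have : (n-ν).choose (k-ν) = 0 := Nat.choose_eq_zero_of_lt (by omega)
        rw [this, Nat.choose_eq_zero_of_lt hkn]
        ring
      · rw [Nat.choose_eq_zero_of_lt hνn, Nat.choose_eq_zero_of_lt hkn]
        ring
  rw [Finset.sum_congr rfl h2, ← Finset.sum_mul, ← Finset.mul_sum, Nat.sum_range_choose]
  ring

lemma sym9_key (m n : ℕ) (hm : 1 ≤ m) (hn : 1 ≤ n) :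
    m * aNum m n = ∑ k ∈ range (m + n + 1), 2^k * k * (m.choose k * n.choose k) := by
  rw [sym9_aNum_eq m n hm hn, Finset.mul_sum]
  rw [← Finset.sum_subset (Finset.range_subset_range.mpr (by omega : m + 1 ≤ m + n + 1))
    (by
      intro k _ hk
      rw [Finset.mem_range, not_lt] at hk
      rw [Nat.choose_eq_zero_of_lt (by omega : m < k)]
      ring)]
  refine Finset.sum_congr rfl ?_
  intro k hk
  rw [Finset.mem_range] at hk
  rcases Nat.eq_zero_or_pos k with rfl | hkpos
  · rw [Nat.choose_eq_zero_of_lt (by omega : m - 1 < m - 0)]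
    ring
  · have e : (m-1).choose (m-k) = (m-1).choose (k-1) := by
      rw [show m - k = (m-1) - (k-1) by omega]
      exact Nat.choose_symm (by omega)
    have e2 : m * (m-1).choose (k-1) = m.choose k * k := by
      have := Nat.add_one_mul_choose_eq (m-1) (k-1)
      rw [show m - 1 + 1 = m by omega, show k - 1 + 1 = k by omega] at this
      exact this
    calc m * (2^k * n.choose k * (m-1).choose (m-k))
        = 2^k * n.choose k * (m * (m-1).choose (k-1)) := by rw [e]; ring
      _ = 2^k * n.choose k * (m.choose k * k) := by rw [e2]
      _ = 2^k * k * (m.choose k * n.choose k) := by ring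

lemma sym9_key_symm (m n : ℕ) (hm : 1 ≤ m) (hn : 1 ≤ n) :
    m * aNum m n = n * aNum n m := by
  rw [sym9_key m n hm hn, sym9_key n m hn hm, Nat.add_comm n m]
  exact Finset.sum_congr rfl fun k _ => by ring

lemma sym9_prod_eq_descPochhammer (k : ℕ) :
    ∏ i ∈ Finset.range k, (X - Polynomial.C (i : ℚ)) = descPochhammer ℚ k := by
  induction k with
  | zero => simp [descPochhammer_zero]
  | succ k ih => rw [Finset.prod_range_succ, ih, descPochhammer_succ_right]; simp

lemma sym9_binomPoly_eval_nat (k n : ℕ) :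
    (binomPoly k).eval (n : ℚ) = (n.choose k : ℚ) := by
  rw [binomPoly, sym9_prod_eq_descPochhammer, eval_mul, eval_C,
    descPochhammer_eval_eq_descFactorial, Nat.descFactorial_eq_factorial_mul_choose]
  have h : ((k.factorial : ℚ)) ≠ 0 := by
    exact_mod_cast Nat.factorial_ne_zero k
  push_cast
  field_simp

lemma sym9_a1Poly_eval (m n : ℕ) (hn : 1 ≤ n) :
    (a1Poly m).eval (n : ℚ) = (aNum m n : ℚ) := by
  have h1 : (a1Poly m).eval (n : ℚ)
      = ∑ ν ∈ range (m+1), ((n-1+ν).choose ν : ℚ) * (n.choose (m-ν) : ℚ) := by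
    rw [a1Poly, eval_finset_sum]
    refine Finset.sum_congr rfl ?_
    intro ν hν
    rw [eval_mul, eval_comp, eval_add, eval_X, eval_C]
    have e : (n : ℚ) + ((ν : ℚ) - 1) = ((n - 1 + ν : ℕ) : ℚ) := by
      rw [Nat.cast_add, Nat.cast_sub hn]
      push_cast; ring
    rw [e, sym9_binomPoly_eval_nat, sym9_binomPoly_eval_nat]
  rw [h1, aNum]
  push_cast
  rw [← Finset.sum_range_reflect
    (fun ν => ((n.choose ν : ℚ) * ((n - 1 + m - ν).choose (n - 1) : ℚ))) (m+1)]
  refine Finset.sum_congr rfl ?_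
  intro ν hν
  rw [Finset.mem_range] at hν
  have e1 : m + 1 - 1 - ν = m - ν := by omega
  have e2 : (n - 1 + m - (m - ν)) = (n - 1) + ν := by omega
  have e3 : ((n-1) + ν).choose (n-1) = ((n-1) + ν).choose ν := Nat.choose_symm_add
  simp only [e1, e2, e3]
  ring

lemma sym9_a2Poly_eval (m n : ℕ) (hm : 1 ≤ m) (hn : 1 ≤ n) :
    (a2Poly m).eval (n : ℚ) = (aNum n m : ℚ) := by
  have h1 : (a2Poly m).eval (n : ℚ)
      = ∑ ν ∈ range (m+1), (m.choose ν : ℚ) * ((m-1+n-ν).choose (m-1) : ℚ) := by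
    rw [a2Poly, eval_finset_sum]
    refine Finset.sum_congr rfl ?_
    intro ν hν
    rw [Finset.mem_range] at hν
    rw [eval_mul, eval_comp, eval_add, eval_X, eval_C, eval_C]
    have e : (n : ℚ) + ((m : ℚ) - 1 - (ν : ℚ)) = ((m - 1 + n - ν : ℕ) : ℚ) := by
      rw [Nat.cast_sub (by omega : ν ≤ m - 1 + n), Nat.cast_add, Nat.cast_sub hm]
      push_cast; ring
    rw [e, sym9_binomPoly_eval_nat]
  rw [h1, aNum]
  push_cast
  rw [Finset.sum_subset (Finset.range_subset_range.mpr (by omega : m + 1 ≤ m + n + 1))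
      (by
        intro k _ hk2
        rw [Finset.mem_range, not_lt] at hk2
        rw [Nat.choose_eq_zero_of_lt (by omega : m < k)]
        push_cast; ring),
    Finset.sum_subset (Finset.range_subset_range.mpr (by omega : n + 1 ≤ m + n + 1))
      (by
        intro k hk1 hk2
        rw [Finset.mem_range, not_lt] at hk2
        rw [Finset.mem_range] at hk1
        rcases le_or_gt k m with h | h
        · rw [Nat.choose_eq_zero_of_lt (show m - 1 + n - k < m - 1 by omega)]
          push_cast; ring
        · rw [Nat.choose_eq_zero_of_lt h]
          push_cast; ring)]

lemma sym9_main_poly (m : ℕ) (hm : 1 ≤ m) :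
    Polynomial.C (m : ℚ) * a1Poly m = Polynomial.X * a2Poly m := by
  have h0 : Polynomial.C (m : ℚ) * a1Poly m - Polynomial.X * a2Poly m = 0 := by
    apply Polynomial.eq_zero_of_infinite_isRoot
    apply Set.infinite_of_injective_forall_mem (f := fun k : ℕ => ((k + 1 : ℕ) : ℚ))
    · intro a b hab
      have : ((a + 1 : ℕ) : ℚ) = ((b + 1 : ℕ) : ℚ) := hab
      exact_mod_cast Nat.add_right_cancel (Nat.cast_injective this)
    · intro k
      simp only [Set.mem_setOf_eq, IsRoot, eval_sub, eval_mul, eval_C, eval_X]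
      rw [sym9_a1Poly_eval m (k+1) (by omega), sym9_a2Poly_eval m (k+1) hm (by omega)]
      have h := sym9_key_symm m (k+1) hm (by omega)
      have h2 : ((m * aNum m (k+1) : ℕ) : ℚ) = (((k+1) * aNum (k+1) m : ℕ) : ℚ) := by
        exact_mod_cast congrArg (Nat.cast (R := ℚ)) h
      push_cast at h2
      push_cast
      linarith
  have := sub_eq_zero.mp h0
  exact this

/-- For every `m ≥ 1`, `m²·A₁(m,x) = x²·A₂(x,m)` as polynomials; consequently
`m²·A(m,n) = n²·A(n,m)` for all positive integers `m, n`. -/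
theorem stmt9 :
    (∀ m : ℕ, 1 ≤ m →
      Polynomial.C ((m : ℚ) ^ 2) * A1Poly m = Polynomial.X ^ 2 * A2Poly m) ∧
    (∀ m n : ℕ, 1 ≤ m → 1 ≤ n → m ^ 2 * ANum m n = n ^ 2 * ANum n m) := by
  constructor
  · intro m hm
    have h := sym9_main_poly m hm
    have h2 : (Polynomial.C ((m:ℚ)) * a1Poly m)^2 = (Polynomial.X * a2Poly m)^2 := by
      rw [h]
    rw [mul_pow, mul_pow, ← Polynomial.C_pow] at h2
    rw [A1Poly, A2Poly]
    exact h2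
  · intro m n hm hn
    have h := sym9_key_symm m n hm hn
    have h2 : (m * aNum m n)^2 = (n * aNum n m)^2 := by rw [h]
    rw [mul_pow, mul_pow] at h2
    rw [ANum, ANum]
    exact h2
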